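/- Let m, r, s be positive integers. Define the finite Fibonacci words over the two-letter alphabet {a, b} by S_0 = (a), S_1 = (a, b), and S_{n+1} = S_n S_{n−1} (concatenation), and for n ≥ 2 let S_n* be S_n with its final two letters removed. Let σ be the substitution replacing each letter a by the pair (rm, r) and each letter b by the pair (sm, s). Then for every n ≥ 2, the sequence σ(S_n*) is an m-palindrome of length 2f_{n+2} − 4, where f_1 = f_2 = 1, f_{k+1} = f_k + f_{k−1} are the Fibonacci numbers. -/

import Mathlib

/-- Value of a finite continued fraction `[a₀, a₁, …, a_i] = a₀ + 1/(a₁ + 1/(⋯ + 1/a_i))`. -/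
noncomputable def cfVal : List ℕ → ℝ
  | [] => 0
  | [a] => (a : ℝ)
  | a :: b :: rest => (a : ℝ) + 1 / cfVal (b :: rest)

/-- `A` is an `m`-palindrome: `[A] = m·[Ã]`, where `Ã` is the reversal of `A`. -/
def IsMPal (m : ℕ) (A : List ℕ) : Prop := cfVal A = (m : ℝ) * cfVal A.reverse

/-- The prefix `(a₀, …, a_i)` of an infinite sequence of partial quotients. -/
def cfPrefix (a : ℕ → ℕ) (i : ℕ) : List ℕ := (List.range (i + 1)).map a

/-- Continuant numerators, index-shifted: `contP a (k+1) = p_k`, `contP a 0 = p₋₁ = 1`. -/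
def contP (a : ℕ → ℕ) : ℕ → ℤ
  | 0 => 1
  | 1 => (a 0 : ℤ)
  | (k+2) => (a (k+1) : ℤ) * contP a (k+1) + contP a k

/-- Continuant denominators, index-shifted: `contQ a (k+1) = q_k`, `contQ a 0 = q₋₁ = 0`. -/
def contQ (a : ℕ → ℕ) : ℕ → ℤ
  | 0 => 0
  | 1 => 1
  | (k+2) => (a (k+1) : ℤ) * contQ a (k+1) + contQ a k

/-- Concatenation of `k` copies of the finite sequence `A`. -/
def listPow (A : List ℕ) (k : ℕ) : List ℕ := (List.replicate k A).flatten

/-- `x` is a quadratic irrational. -/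
def IsQuadraticIrrational (x : ℝ) : Prop :=
  Irrational x ∧ ∃ a b c : ℤ, a ≠ 0 ∧ (a : ℝ) * x ^ 2 + (b : ℝ) * x + (c : ℝ) = 0

/-- `x` is a reduced quadratic irrational: `x > 1` and its algebraic (Galois) conjugate
lies strictly between `-1` and `0`. -/
def IsReducedQuadIrr (x : ℝ) : Prop :=
  Irrational x ∧ 1 < x ∧
    ∃ a b c : ℤ, a ≠ 0 ∧ (a : ℝ) * x ^ 2 + (b : ℝ) * x + (c : ℝ) = 0 ∧
      ∀ y : ℝ, y ≠ x → (a : ℝ) * y ^ 2 + (b : ℝ) * y + (c : ℝ) = 0 → -1 < y ∧ y < 0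

/-- `x` and `y` are equivalent: `x = (a + b·y)/(c + d·y)` for integers with `ad - bc = ±1`. -/
def RealEquiv (x y : ℝ) : Prop :=
  ∃ a b c d : ℤ, (a * d - b * c = 1 ∨ a * d - b * c = -1) ∧
    ((c : ℝ) + (d : ℝ) * y ≠ 0) ∧ x = ((a : ℝ) + (b : ℝ) * y) / ((c : ℝ) + (d : ℝ) * y)


/-- The finite Fibonacci words over the alphabet `{a, b}` (with `a = false`, `b = true`):
`S₀ = (a)`, `S₁ = (a, b)`, `S_{n+1} = S_n S_{n-1}`. -/
def fibWord : ℕ → List Bool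
  | 0 => [false]
  | 1 => [false, true]
  | (n+2) => fibWord (n+1) ++ fibWord n

/-- The substitution replacing the letter `a = false` by `(r·m, r)` and
the letter `b = true` by `(s·m, s)`. -/
def substWord (m r s : ℕ) (w : List Bool) : List ℕ :=
  w.flatMap (fun x => if x then [s * m, s] else [r * m, r])


/-- The last two letters of `fibWord n`, depending on parity. -/
def tpair (n : ℕ) : List Bool := if n % 2 = 1 then [false, true] else [true, false]

lemma tpair_add_two (n : ℕ) : tpair (n + 2) = tpair n := by
  simp [tpair, Nat.add_mod]

lemma tpair_reverse (n : ℕ) : (tpair n).reverse = tpair (n + 1) := by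
  rcases Nat.mod_two_eq_zero_or_one n with h | h <;>
    simp [tpair, h, Nat.add_mod]

/-- `fibWord n` with its last two letters removed (for `n ≥ 1`). -/
def fwCore : ℕ → List Bool
  | 0 => []
  | 1 => []
  | 2 => [false]
  | (n+3) => fwCore (n+2) ++ tpair (n+2) ++ fwCore (n+1)

lemma fibWord_eq_core (n : ℕ) : fibWord (n + 1) = fwCore (n + 1) ++ tpair (n + 1) := by
  induction n using Nat.twoStepInduction with
  | zero => rfl
  | one => rfl
  | more k ih1 ih2 =>
      show fibWord (k + 3) = fwCore (k + 3) ++ tpair (k + 3)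
      have h3 : tpair (k + 3) = tpair (k + 1) := tpair_add_two (k+1)
      calc fibWord (k + 3) = fibWord (k + 2) ++ fibWord (k + 1) := rfl
        _ = (fwCore (k + 2) ++ tpair (k + 2)) ++ (fwCore (k + 1) ++ tpair (k + 1)) := by
            rw [ih2, ih1]
        _ = fwCore (k + 3) ++ tpair (k + 3) := by
            rw [h3]; show _ = (fwCore (k+2) ++ tpair (k+2) ++ fwCore (k+1)) ++ tpair (k+1)
            simp [List.append_assoc]

lemma fwCore_swap (n : ℕ) :
    fwCore (n+2) ++ tpair (n+2) ++ fwCore (n+1) = fwCore (n+1) ++ tpair (n+1) ++ fwCore (n+2) := by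
  induction n with
  | zero => rfl
  | succ k ih =>
      have h1 : tpair (k + 3) = tpair (k + 1) := tpair_add_two (k+1)
      show fwCore (k+3) ++ tpair (k+3) ++ fwCore (k+2) = fwCore (k+2) ++ tpair (k+2) ++ fwCore (k+3)
      calc fwCore (k+3) ++ tpair (k+3) ++ fwCore (k+2)
          = (fwCore (k+2) ++ tpair (k+2) ++ fwCore (k+1)) ++ tpair (k+1) ++ fwCore (k+2) := by
            rw [h1]; rfl
        _ = fwCore (k+2) ++ tpair (k+2) ++ (fwCore (k+1) ++ tpair (k+1) ++ fwCore (k+2)) := by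
            simp [List.append_assoc]
        _ = fwCore (k+2) ++ tpair (k+2) ++ (fwCore (k+2) ++ tpair (k+2) ++ fwCore (k+1)) := by
            rw [ih]
        _ = fwCore (k+2) ++ tpair (k+2) ++ fwCore (k+3) := rfl

lemma fwCore_palindrome (n : ℕ) : (fwCore n).reverse = fwCore n := by
  induction n using Nat.twoStepInduction with
  | zero => rfl
  | one => rfl
  | more k ih1 ih2 =>
      match k, ih1, ih2 with
      | 0, _, _ => rfl
      | (j+1), ih1, ih2 =>
        show (fwCore (j+3)).reverse = fwCore (j+3)
        have : (fwCore (j+3)).reverse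
            = (fwCore (j+1)).reverse ++ ((tpair (j+2)).reverse ++ (fwCore (j+2)).reverse) := by
          show (fwCore (j+2) ++ tpair (j+2) ++ fwCore (j+1)).reverse = _
          simp [List.reverse_append]
        rw [this, ih1, ih2, tpair_reverse]
        have h1 : tpair (j + 3) = tpair (j + 1) := tpair_add_two (j+1)
        rw [h1, ← List.append_assoc]
        show fwCore (j+1) ++ tpair (j+1) ++ fwCore (j+2) = fwCore (j+3)
        rw [← fwCore_swap j]
        rfl

lemma fwCore_ne_nil (n : ℕ) : fwCore (n + 2) ≠ [] := by
  induction n with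
  | zero => simp [fwCore]
  | succ k ih =>
      show fwCore (k+2) ++ tpair (k+2) ++ fwCore (k+1) ≠ []
      simp only [ne_eq, List.append_eq_nil_iff]
      exact fun h => ih h.1.1

lemma tpair_two_elems (n : ℕ) : ∃ x y : Bool, tpair n = [x, y] := by
  rcases Nat.mod_two_eq_zero_or_one n with h | h <;> simp [tpair, h]

lemma dropLast_two (l : List Bool) (x y : Bool) : ((l ++ [x, y]).dropLast).dropLast = l := by
  have : l ++ [x, y] = (l ++ [x]) ++ [y] := by simp
  rw [this, List.dropLast_concat, List.dropLast_concat]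

lemma fibWord_dd (n : ℕ) : (fibWord (n+1)).dropLast.dropLast = fwCore (n+1) := by
  obtain ⟨x, y, hxy⟩ := tpair_two_elems (n+1)
  rw [fibWord_eq_core, hxy, dropLast_two]

lemma fibWord_length (n : ℕ) : (fibWord n).length = Nat.fib (n + 2) := by
  induction n using Nat.twoStepInduction with
  | zero => rfl
  | one => rfl
  | more k ih1 ih2 =>
      show (fibWord (k+1) ++ fibWord k).length = Nat.fib (k + 4)
      rw [List.length_append, ih1, ih2]
      show Nat.fib (k+3) + Nat.fib (k+2) = Nat.fib (k+4)
      have h4 : Nat.fib (k+4) = Nat.fib (k+2) + Nat.fib (k+3) := Nat.fib_add_two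
      omega

lemma cfVal_cons (a : ℕ) (L : List ℕ) (h : L ≠ []) :
    cfVal (a :: L) = (a : ℝ) + 1 / cfVal L := by
  cases L with
  | nil => exact absurd rfl h
  | cons b rest => rfl

lemma cfVal_pos : ∀ L : List ℕ, (∀ x ∈ L, 0 < x) → L ≠ [] → 0 < cfVal L := by
  intro L
  induction L with
  | nil => intro _ h; exact absurd rfl h
  | cons a L ih =>
      intro hpos _
      have ha : (0 : ℝ) < (a : ℝ) := by
        exact_mod_cast hpos a List.mem_cons_self
      cases L with
      | nil => simpa [cfVal] using ha
      | cons b rest =>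
          have hL : 0 < cfVal (b :: rest) :=
            ih (fun x hx => hpos x (List.mem_cons_of_mem a hx)) (by simp)
          rw [cfVal_cons a _ (by simp)]
          positivity

lemma flatMap_pair_ne_nil (f : Bool → List ℕ) (hf : ∀ x, f x ≠ [])
    (w : List Bool) (hw : w ≠ []) : w.flatMap f ≠ [] := by
  cases w with
  | nil => exact absurd rfl hw
  | cons x w' =>
      simp only [List.flatMap_cons, ne_eq, List.append_eq_nil_iff]
      exact fun h => hf x h.1

lemma key_mpal (m : ℕ) (hm : 0 < m) (c : Bool → ℕ) (hc : ∀ x, 0 < c x) :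
    ∀ w : List Bool, w ≠ [] →
      cfVal (w.flatMap (fun x => [c x * m, c x]))
        = (m : ℝ) * cfVal (w.flatMap (fun x => [c x, c x * m])) := by
  intro w
  induction w with
  | nil => intro h; exact absurd rfl h
  | cons x w' ih =>
      intro _
      have hcx : (0 : ℝ) < (c x : ℝ) := by exact_mod_cast hc x
      have hmR : (0 : ℝ) < (m : ℝ) := by exact_mod_cast hm
      cases w' with
      | nil =>
          show cfVal [c x * m, c x] = (m : ℝ) * cfVal [c x, c x * m]
          have h1 : cfVal [c x * m, c x] = (c x * m : ℕ) + 1 / (c x : ℝ) := rfl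
          have h2 : cfVal [c x, c x * m] = (c x : ℕ) + 1 / ((c x * m : ℕ) : ℝ) := rfl
          rw [h1, h2]
          push_cast
          field_simp
      | cons y w'' =>
          set W := (y :: w'' : List Bool)
          have hWne : W ≠ [] := by simp [W]
          have hFne : W.flatMap (fun x => [c x * m, c x]) ≠ [] :=
            flatMap_pair_ne_nil _ (fun x => by simp) W hWne
          have hGne : W.flatMap (fun x => [c x, c x * m]) ≠ [] :=
            flatMap_pair_ne_nil _ (fun x => by simp) W hWne
          have hGpos : 0 < cfVal (W.flatMap (fun x => [c x, c x * m])) := by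
            apply cfVal_pos _ _ hGne
            intro z hz
            rw [List.mem_flatMap] at hz
            obtain ⟨b, _, hb⟩ := hz
            simp only [List.mem_cons, List.mem_singleton] at hb
            rcases hb with h | h | h
            · exact h ▸ hc b
            · exact h ▸ Nat.mul_pos (hc b) hm
            · simp at h
          set G : ℝ := cfVal (W.flatMap (fun x => [c x, c x * m])) with hG
          have hF : cfVal (W.flatMap (fun x => [c x * m, c x])) = (m : ℝ) * G := ih hWne
          have e1 : cfVal ((x :: W).flatMap (fun x => [c x * m, c x]))
              = (c x * m : ℕ) + 1 / ((c x : ℝ) + 1 / ((m : ℝ) * G)) := by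
            show cfVal ((c x * m) :: (c x) :: W.flatMap (fun x => [c x * m, c x])) = _
            rw [cfVal_cons _ _ (by simp), cfVal_cons _ _ hFne, hF]
          have e2 : cfVal ((x :: W).flatMap (fun x => [c x, c x * m]))
              = (c x : ℕ) + 1 / (((c x * m : ℕ) : ℝ) + 1 / G) := by
            show cfVal ((c x) :: (c x * m) :: W.flatMap (fun x => [c x, c x * m])) = _
            rw [cfVal_cons _ _ (by simp), cfVal_cons _ _ hGne]
          rw [e1, e2]
          push_cast
          have hGne0 : G ≠ 0 := ne_of_gt hGpos
          have hd1 : (c x : ℝ) + 1 / ((m : ℝ) * G) ≠ 0 := by positivity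
          have hd2 : (c x : ℝ) * (m : ℝ) + 1 / G ≠ 0 := by positivity
          field_simp

lemma substWord_length (m r s : ℕ) (w : List Bool) :
    (substWord m r s w).length = 2 * w.length := by
  induction w with
  | nil => rfl
  | cons x w' ih =>
      show ((if x then [s*m, s] else [r*m, r]) ++ substWord m r s w').length = _
      cases x <;> simp [ih] <;> omega


theorem fibonacci_word_m_palindrome
    (m r s : ℕ) (hm : 0 < m) (hr : 0 < r) (hs : 0 < s)
    (n : ℕ) (hn : 2 ≤ n) :
    IsMPal m (substWord m r s (fibWord n).dropLast.dropLast) ∧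
    (substWord m r s (fibWord n).dropLast.dropLast).length = 2 * Nat.fib (n + 2) - 4 := by
  constructor
  · -- the m-palindrome property
    obtain ⟨k, rfl⟩ : ∃ k, n = k + 2 := ⟨n - 2, by omega⟩
    rw [show k + 2 = (k + 1) + 1 from rfl, fibWord_dd]
    set c : Bool → ℕ := fun x => if x then s else r with hc
    have hcpos : ∀ x, 0 < c x := by intro x; cases x <;> simp [hc, hr, hs]
    have hsub : substWord m r s (fwCore (k + 2))
        = (fwCore (k + 2)).flatMap (fun x => [c x * m, c x]) := by
      unfold substWord
      congr 1
      funext x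
      cases x <;> simp [hc]
    have hrev : (substWord m r s (fwCore (k + 2))).reverse
        = (fwCore (k + 2)).flatMap (fun x => [c x, c x * m]) := by
      rw [hsub, List.reverse_flatMap, fwCore_palindrome]
      have hfun : (List.reverse ∘ fun x => [c x * m, c x]) = fun x => [c x, c x * m] := by
        funext x; simp
      rw [hfun]
    unfold IsMPal
    rw [hrev, hsub]
    exact key_mpal m hm c hcpos _ (fwCore_ne_nil k)
  · -- the length
    obtain ⟨k, rfl⟩ : ∃ k, n = k + 2 := ⟨n - 2, by omega⟩
    rw [show k + 2 = (k + 1) + 1 from rfl, fibWord_dd, substWord_length]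
    have hfw : fibWord (k + 2) = fwCore (k + 2) ++ tpair (k + 2) := fibWord_eq_core (k + 1)
    have h2 : (tpair (k + 2)).length = 2 := by
      obtain ⟨x, y, hxy⟩ := tpair_two_elems (k + 2)
      simp [hxy]
    have hlen : (fibWord (k + 2)).length = Nat.fib (k + 4) := fibWord_length (k + 2)
    have hcore : (fwCore (k + 2)).length + 2 = Nat.fib (k + 4) := by
      have h3 := congrArg List.length hfw
      rw [List.length_append, h2] at h3
      omega
    have hfib : 2 ≤ Nat.fib (k + 4) := by
      calc 2 = Nat.fib 3 := rfl
        _ ≤ Nat.fib (k + 4) := Nat.fib_mono (by omega)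
    show 2 * (fwCore (k + 2)).length = 2 * Nat.fib (k + 4) - 4
    omega
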